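/- Let H ∈ C(ℝⁿ×ℝⁿ) satisfy (A2)–(A4) and condition (A8)₊ with constants η₀ > 0 and θ₀ > 1 (we may assume θ₀ < 2). Then H satisfies (A7)₊: for every η ∈ (0, η₀/2), every θ ∈ (1,θ₀) and all x, p, q ∈ ℝⁿ with H(x,p) ≤ 0 and H(x,q) ≥ η, one has H(x, p + θ(q−p)) > θη. -/

import Mathlib

noncomputable section

open Filter Set Topology

namespace HJpaper

/-- Points of `ℝⁿ` (with the Euclidean norm). -/
abbrev E (n : ℕ) := EuclideanSpace ℝ (Fin n)

/-- The vector of `ℝⁿ` with integer coordinates `k`. -/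
def lat (n : ℕ) (k : Fin n → ℤ) : E n :=
  (WithLp.equiv 2 (Fin n → ℝ)).symm fun i => (k i : ℝ)

/-- `f : ℝⁿ → ℝ` is `ℤⁿ`-periodic. -/
def Per {n : ℕ} (f : E n → ℝ) : Prop :=
  ∀ (x : E n) (k : Fin n → ℤ), f (x + lat n k) = f x

/-- (A2): continuity of the Hamiltonian. -/
def ContH {n : ℕ} (H : E n → E n → ℝ) : Prop :=
  Continuous fun q : E n × E n => H q.1 q.2

/-- (A3): `ℤⁿ`-periodicity of the Hamiltonian in `x`. -/
def PerH {n : ℕ} (H : E n → E n → ℝ) : Prop :=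
  ∀ p : E n, Per fun x => H x p

/-- (A4): coercivity of the Hamiltonian. -/
def Coercive {n : ℕ} (H : E n → E n → ℝ) : Prop :=
  ∀ M : ℝ, ∃ r : ℝ, ∀ x p : E n, r ≤ ‖p‖ → M ≤ H x p

/-- viscosity subsolution of `u_t + H(x, D_x u) = 0` in `Q = ℝⁿ × (0,∞)`. -/
def CPSub {n : ℕ} (H : E n → E n → ℝ) (u : E n → ℝ → ℝ) : Prop :=
  ∀ φ : E n → ℝ → ℝ, ContDiff ℝ 1 (fun q : E n × ℝ => φ q.1 q.2) →
    ∀ (x : E n) (t : ℝ), 0 < t →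
      IsLocalMaxOn (fun q : E n × ℝ => u q.1 q.2 - φ q.1 q.2)
        {q : E n × ℝ | 0 < q.2} (x, t) →
      deriv (fun s => φ x s) t + H x (gradient (fun y => φ y t) x) ≤ 0

/-- viscosity supersolution of `u_t + H(x, D_x u) = 0` in `Q = ℝⁿ × (0,∞)`. -/
def CPSuper {n : ℕ} (H : E n → E n → ℝ) (u : E n → ℝ → ℝ) : Prop :=
  ∀ φ : E n → ℝ → ℝ, ContDiff ℝ 1 (fun q : E n × ℝ => φ q.1 q.2) →
    ∀ (x : E n) (t : ℝ), 0 < t →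
      IsLocalMinOn (fun q : E n × ℝ => u q.1 q.2 - φ q.1 q.2)
        {q : E n × ℝ | 0 < q.2} (x, t) →
      0 ≤ deriv (fun s => φ x s) t + H x (gradient (fun y => φ y t) x)

/-- viscosity solution of `u_t + H(x, D_x u) = 0` in `Q`. -/
def CPSol {n : ℕ} (H : E n → E n → ℝ) (u : E n → ℝ → ℝ) : Prop :=
  CPSub H u ∧ CPSuper H u

/-- `u` is a solution of the Cauchy problem (CP) for the data `u₀`: it is uniformly
continuous on `ℝⁿ × [0,∞)`, `ℤⁿ`-periodic in `x`, a viscosity solution of the PDE in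
`Q = ℝⁿ × (0,∞)`, and attains the initial data (continuously, by uniform continuity). -/
def IsCP {n : ℕ} (H : E n → E n → ℝ) (u₀ : E n → ℝ) (u : E n → ℝ → ℝ) : Prop :=
  UniformContinuousOn (fun q : E n × ℝ => u q.1 q.2) {q : E n × ℝ | 0 ≤ q.2} ∧
  (∀ t : ℝ, 0 ≤ t → Per fun x => u x t) ∧
  CPSol H u ∧
  ∀ x : E n, u x 0 = u₀ x

/-- viscosity subsolution of `H(x, Dv(x)) ≤ g(x)` in `ℝⁿ`. -/
def StatSub {n : ℕ} (H : E n → E n → ℝ) (g : E n → ℝ) (v : E n → ℝ) : Prop :=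
  ∀ φ : E n → ℝ, ContDiff ℝ 1 φ →
    ∀ x : E n, IsLocalMax (fun y => v y - φ y) x → H x (gradient φ x) ≤ g x

/-- viscosity supersolution of `H(x, Dv(x)) ≥ g(x)` in `ℝⁿ`. -/
def StatSuper {n : ℕ} (H : E n → E n → ℝ) (g : E n → ℝ) (v : E n → ℝ) : Prop :=
  ∀ φ : E n → ℝ, ContDiff ℝ 1 φ →
    ∀ x : E n, IsLocalMin (fun y => v y - φ y) x → g x ≤ H x (gradient φ x)

/-- viscosity solution of `H(x, Dv(x)) = c` in `ℝⁿ`. -/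
def StatSol {n : ℕ} (H : E n → E n → ℝ) (c : ℝ) (v : E n → ℝ) : Prop :=
  StatSub H (fun _ => c) v ∧ StatSuper H (fun _ => c) v

/-- Lipschitz continuity (with some constant). -/
def IsLip {n : ℕ} (f : E n → ℝ) : Prop := ∃ K : NNReal, LipschitzWith K f

/-- (A5): the additive eigenvalue is zero, i.e. `H(x,Dv)=0` has a Lipschitz
`ℤⁿ`-periodic viscosity solution. -/
def A5 {n : ℕ} (H : E n → E n → ℝ) : Prop :=
  ∃ v : E n → ℝ, IsLip v ∧ Per v ∧ StatSol H 0 v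

/-- condition (A6)₊. -/
def A6plus {n : ℕ} (H : E n → E n → ℝ) : Prop :=
  ∃ η₀ > (0:ℝ), ∃ θ₀ > (1:ℝ),
    ∀ η ∈ Set.Ioo (0:ℝ) η₀, ∀ θ ∈ Set.Ioo (1:ℝ) θ₀, ∃ ψ > (0:ℝ),
      ∀ x p q : E n, H x p ≤ 0 → η ≤ H x q → η * θ + ψ ≤ H x (p + θ • (q - p))

/-- condition (A6)₋. -/
def A6minus {n : ℕ} (H : E n → E n → ℝ) : Prop :=
  ∃ η₀ > (0:ℝ), ∃ θ₀ > (1:ℝ),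
    ∀ η ∈ Set.Ioo (0:ℝ) η₀, ∀ θ ∈ Set.Ioo (1:ℝ) θ₀, ∃ ψ > (0:ℝ),
      ∀ x p q : E n, H x p ≤ 0 → -η ≤ H x q → -(η * θ) + ψ ≤ H x (p + θ • (q - p))

/-- the modulus `ω_{H,R}`. -/
def omegaH {n : ℕ} (H : E n → E n → ℝ) (R r : ℝ) : ℝ :=
  sSup {a : ℝ | ∃ x p q : E n, ‖p‖ ≤ R ∧ ‖q‖ ≤ R ∧ ‖p - q‖ ≤ r ∧ a = |H x p - H x q|}

/-- `w(x,t) = sup_{s ≥ t} [u(x,t) − v₀(x) − θ(u(x,s) − v₀(x) + η(s−t))]`. -/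
def wPlus {n : ℕ} (u : E n → ℝ → ℝ) (v₀ : E n → ℝ) (η θ : ℝ) (x : E n) (t : ℝ) : ℝ :=
  sSup {a : ℝ | ∃ s : ℝ, t ≤ s ∧ a = u x t - v₀ x - θ * (u x s - v₀ x + η * (s - t))}

/-- `w(x,t) = max_{0 ≤ s ≤ t} [u(x,t) − v₀(x) − θ(u(x,s) − v₀(x) − η(s−t))]`. -/
def wMinus {n : ℕ} (u : E n → ℝ → ℝ) (v₀ : E n → ℝ) (η θ : ℝ) (x : E n) (t : ℝ) : ℝ :=
  sSup {a : ℝ | ∃ s : ℝ, 0 ≤ s ∧ s ≤ t ∧ a = u x t - v₀ x - θ * (u x s - v₀ x - η * (s - t))}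

set_option maxHeartbeats 1000000 in
/-- (A8)₊ implies (A7)₊ (for `η < η₀/2` and `θ ∈ (1,θ₀)`, `θ₀ < 2`). -/
theorem stmt_18 {n : ℕ} (H : E n → E n → ℝ)
    (hHc : ContH H) (hHp : PerH H) (hco : Coercive H)
    (η₀ θ₀ : ℝ) (hη₀ : 0 < η₀) (hθ₀ : 1 < θ₀) (hθ₀2 : θ₀ < 2)
    (hA8 : ∀ η ∈ Set.Ioo (0:ℝ) η₀, ∀ θ ∈ Set.Ioo (1:ℝ) θ₀, ∃ ψ > (0:ℝ),
      ∀ x p q : E n, H x p = 0 → H x q = η → η * θ + ψ ≤ H x (p + θ • (q - p))) :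
    ∀ η : ℝ, 0 < η → η < η₀ / 2 → ∀ θ ∈ Set.Ioo (1:ℝ) θ₀,
      ∀ x p q : E n, H x p ≤ 0 → η ≤ H x q → θ * η < H x (p + θ • (q - p)) := by
  intro η hη hηη₀ θ hθ x p q hp hq
  obtain ⟨hθ1, hθθ₀⟩ := hθ
  set f : ℝ → ℝ := fun t => H x (p + t • (q - p)) with hfdef
  have hfc : Continuous f := by
    exact hHc.comp (continuous_const.prodMk (continuous_const.add
      (continuous_id.smul continuous_const)))
  have hf0 : f 0 ≤ 0 := by
    have : p + (0:ℝ) • (q - p) = p := by module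
    simpa [f, this] using hp
  have hf1 : η ≤ f 1 := by
    have : p + (1:ℝ) • (q - p) = q := by module
    simpa [f, this] using hq
  -- key consequence of (A8)
  have key : ∀ a d η'' θ'', f a = 0 → f d = η'' → 0 < η'' → η'' < η₀ →
      1 < θ'' → θ'' < θ₀ → θ'' * η'' < f (a + θ'' * (d - a)) := by
    intro a d η'' θ'' ha hd h1 h2 h3 h4
    obtain ⟨ψ, hψ, hh⟩ := hA8 η'' ⟨h1, h2⟩ θ'' ⟨h3, h4⟩
    have h5 := hh x (p + a • (q - p)) (p + d • (q - p)) ha hd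
    have heq : (p + a • (q - p)) + θ'' • ((p + d • (q - p)) - (p + a • (q - p)))
        = p + (a + θ'' * (d - a)) • (q - p) := by module
    rw [heq] at h5
    have : θ'' * η'' < η'' * θ'' + ψ := by linarith [mul_comm θ'' η'']
    exact lt_of_lt_of_le this h5
  -- a zero s of f in [0,1]
  obtain ⟨s, hsmem, hfs⟩ : ∃ s ∈ Icc (0:ℝ) 1, f s = 0 := by
    have h01 : (0:ℝ) ≤ 1 := zero_le_one
    have := intermediate_value_Icc h01 hfc.continuousOn
    have h0mem : (0:ℝ) ∈ Icc (f 0) (f 1) := ⟨hf0, by linarith⟩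
    obtain ⟨s, hs, hfs⟩ := this h0mem
    exact ⟨s, hs, hfs⟩
  -- a point t₁ ∈ (s,1] with f t₁ = η
  obtain ⟨t₁, ht₁mem, hft₁⟩ : ∃ t₁ ∈ Icc s 1, f t₁ = η := by
    have := intermediate_value_Icc hsmem.2 hfc.continuousOn
    exact this ⟨by rw [hfs]; exact le_of_lt hη, hf1⟩
  have hst₁ : s < t₁ := by
    rcases lt_or_eq_of_le ht₁mem.1 with h | h
    · exact h
    · exfalso; rw [← h, hfs] at hft₁; linarith
  have hs0 : 0 ≤ s := hsmem.1
  have ht₁1 : t₁ ≤ 1 := ht₁mem.2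
  have ht₁θ : t₁ < θ := lt_of_le_of_lt ht₁1 hθ1
  have hts : 0 < t₁ - s := by linarith
  set lam : ℝ := η / (t₁ - s) with hlam
  have hlampos : 0 < lam := div_pos hη hts
  set L : ℝ → ℝ := fun t => min (lam * (t - s)) (θ * η) with hLdef
  have hLc : Continuous L := Continuous.min (by continuity) continuous_const
  have hθη : 0 < θ * η := by positivity
  have hθηη₀ : θ * η < η₀ := by
    have h := mul_lt_mul_of_pos_right (show θ < 2 by linarith) hη
    linarith
  have hLt₁ : ∀ t, L t ≤ θ * η := fun t => min_le_right _ _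
  -- by contradiction
  by_contra hcon
  push_neg at hcon
  -- f θ ≤ L θ
  have hlθ : θ * η ≤ lam * (θ - s) := by
    rw [hlam, div_mul_eq_mul_div, le_div_iff₀ hts]
    have he : η * (θ - s) - θ * η * (t₁ - s) = η * ((θ - 1) * s + θ * (1 - t₁)) := by ring
    have h1 : 0 ≤ (θ - 1) * s := mul_nonneg (by linarith) hs0
    have h2 : 0 ≤ θ * (1 - t₁) := mul_nonneg (by linarith) (by linarith)
    have h3 : 0 ≤ η * ((θ - 1) * s + θ * (1 - t₁)) := mul_nonneg (le_of_lt hη) (by linarith)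
    linarith
  have hfθL : f θ ≤ L θ := le_min (le_trans hcon hlθ) hcon
  set B : Set ℝ := {t | t ∈ Ioc t₁ θ ∧ f t ≤ L t} with hBdef
  have hθB : θ ∈ B := ⟨⟨ht₁θ, le_refl θ⟩, hfθL⟩
  have hBne : B.Nonempty := ⟨θ, hθB⟩
  have hBbdd : BddBelow B := ⟨t₁, fun t ht => le_of_lt ht.1.1⟩
  set b : ℝ := sInf B with hbdef
  -- b ∈ closure B hence f b ≤ L b, t₁ ≤ b ≤ θ
  have hbcl : b ∈ closure B := csInf_mem_closure hBne hBbdd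
  have hclsub : closure B ⊆ {t | f t ≤ L t ∧ t₁ ≤ t ∧ t ≤ θ} := by
    apply closure_minimal
    · intro t ht; exact ⟨ht.2, le_of_lt ht.1.1, ht.1.2⟩
    · exact IsClosed.inter (isClosed_le hfc hLc)
        (IsClosed.inter (isClosed_le continuous_const continuous_id)
          (isClosed_le continuous_id continuous_const))
  have hb1 : f b ≤ L b := (hclsub hbcl).1
  have hbt₁ : t₁ ≤ b := (hclsub hbcl).2.1
  have hbθ : b ≤ θ := (hclsub hbcl).2.2
  -- seed: f t > L t for t ∈ (t₁, s + θ₀(t₁ - s))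
  have seed : ∀ t, t₁ < t → t < s + θ₀ * (t₁ - s) → L t < f t := by
    intro t h1 h2
    set θt : ℝ := (t - s) / (t₁ - s) with hθt
    have hθt1 : 1 < θt := by
      rw [hθt, lt_div_iff₀ hts]; linarith
    have hθtθ₀ : θt < θ₀ := by
      rw [hθt, div_lt_iff₀ hts]; linarith
    have hkey := key s t₁ η θt hfs hft₁ hη (by linarith) hθt1 hθtθ₀
    have hteq : s + θt * (t₁ - s) = t := by
      rw [hθt]; field_simp; ring
    rw [hteq] at hkey
    calc L t ≤ lam * (t - s) := min_le_left _ _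
      _ = θt * η := by rw [hθt, hlam]; field_simp
      _ < f t := hkey
  -- b > t₁
  have hbt₁' : t₁ < b := by
    have hmin : min θ (s + θ₀ * (t₁ - s)) ≤ b := by
      apply le_csInf hBne
      intro t ht
      by_contra hlt
      push_neg at hlt
      have h1 : t < θ := lt_of_lt_of_le hlt (min_le_left _ _)
      have h2 : t < s + θ₀ * (t₁ - s) := lt_of_lt_of_le hlt (min_le_right _ _)
      exact absurd ht.2 (not_le_of_gt (seed t ht.1.1 h2))
    have h3 : 1 * (t₁ - s) < θ₀ * (t₁ - s) := mul_lt_mul_of_pos_right hθ₀ hts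
    have : t₁ < min θ (s + θ₀ * (t₁ - s)) := lt_min ht₁θ (by linarith)
    linarith
  -- f t > L t on (t₁, b)
  have hmid : ∀ t, t ∈ Ioo t₁ b → L t < f t := by
    intro t ht
    by_contra hle
    push_neg at hle
    have : t ∈ B := ⟨⟨ht.1, le_trans (le_of_lt ht.2) hbθ⟩, hle⟩
    have := csInf_le hBbdd this
    linarith [ht.2]
  -- f b ≥ L b by continuity from the left
  have hb2 : L b ≤ f b := by
    have hsub : Ioo t₁ b ⊆ {t | L t ≤ f t} := fun t ht => le_of_lt (hmid t ht)
    have hcl2 : closure (Ioo t₁ b) ⊆ {t | L t ≤ f t} :=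
      closure_minimal hsub (isClosed_le hLc hfc)
    have : b ∈ closure (Ioo t₁ b) := by
      rw [closure_Ioo (ne_of_lt hbt₁')]
      exact ⟨le_of_lt hbt₁', le_refl b⟩
    exact hcl2 this
  have hfb : f b = L b := le_antisymm hb1 hb2
  -- setting the contradiction
  have hbs : 0 < b - s := by linarith
  set ρ : ℝ := (b - s) / (t₁ - s) with hρ
  have hρ1 : 1 < ρ := by rw [hρ, lt_div_iff₀ hts]; linarith
  set θ'' : ℝ := (1 + min θ₀ ρ) / 2 with hθ''
  have hminθρ : 1 < min θ₀ ρ := lt_min hθ₀ hρ1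
  have hθ''1 : 1 < θ'' := by rw [hθ'']; linarith
  have hθ''θ₀ : θ'' < θ₀ := by
    have : min θ₀ ρ ≤ θ₀ := min_le_left _ _
    rw [hθ'']; linarith
  have hθ''ρ : θ'' < ρ := by
    have : min θ₀ ρ ≤ ρ := min_le_right _ _
    rw [hθ'']; linarith
  have hθ''pos : 0 < θ'' := by linarith
  set c : ℝ := s + (b - s) / θ'' with hc
  have hcs : c - s = (b - s) / θ'' := by rw [hc]; ring
  have hcspos : 0 < c - s := by rw [hcs]; positivity
  have hρeq : (t₁ - s) * ρ = b - s := by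
    rw [hρ]; field_simp
  have hdil0 : θ'' * (c - s) = b - s := by
    rw [hcs]; field_simp
  have hct₁ : t₁ < c := by
    by_contra hle
    push_neg at hle
    have h1 : θ'' * (c - s) ≤ θ'' * (t₁ - s) :=
      mul_le_mul_of_nonneg_left (by linarith) (le_of_lt hθ''pos)
    have h2 : θ'' * (t₁ - s) < ρ * (t₁ - s) := mul_lt_mul_of_pos_right hθ''ρ hts
    have h3 : ρ * (t₁ - s) = (t₁ - s) * ρ := mul_comm _ _
    linarith
  have hcb : c < b := by
    by_contra hle
    push_neg at hle
    have h1 : 1 * (c - s) < θ'' * (c - s) := mul_lt_mul_of_pos_right hθ''1 hcspos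
    linarith
  have hdil : s + θ'' * (c - s) = b := by linarith [hdil0]
  have hfcL : L c < f c := hmid c ⟨hct₁, hcb⟩
  have hLcpos : 0 < L c := lt_min (by positivity) hθη
  have hℓb : lam * (b - s) = θ'' * (lam * (c - s)) := by
    rw [← hdil0]; ring
  have hθ''Lc : L b ≤ θ'' * L c := by
    have hmm : θ'' * min (lam * (c - s)) (θ * η)
        = min (θ'' * (lam * (c - s))) (θ'' * (θ * η)) :=
      mul_min_of_nonneg _ _ (le_of_lt hθ''pos)
    show min (lam * (b - s)) (θ * η) ≤ θ'' * min (lam * (c - s)) (θ * η)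
    rw [hmm]
    apply min_le_min
    · rw [hℓb]
    · have h4 := mul_le_mul_of_nonneg_right (le_of_lt hθ''1) (le_of_lt hθη)
      linarith
  by_cases hcase : f c < η₀
  · -- case 1
    have hkey := key s c (f c) θ'' hfs rfl (lt_trans hLcpos hfcL) hcase hθ''1 hθ''θ₀
    rw [hdil] at hkey
    have : θ'' * L c < θ'' * f c := (mul_lt_mul_iff_right₀ hθ''pos).mpr hfcL
    have : L b < f b := by linarith
    linarith [hfb]
  · -- case 2 : f c ≥ η₀
    push_neg at hcase
    set ν : ℝ := (θ * η + η₀) / 2 with hν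
    have hν1 : θ * η < ν := by rw [hν]; linarith
    have hν2 : ν < η₀ := by rw [hν]; linarith
    have hνpos : 0 < ν := lt_trans hθη hν1
    have hfbν : f b < ν := by
      calc f b = L b := hfb
        _ ≤ θ * η := hLt₁ b
        _ < ν := hν1
    -- IVT on [c, b] downward
    obtain ⟨d, hdmem, hfd⟩ : ∃ d ∈ Icc c b, f d = ν := by
      have := intermediate_value_Icc' (le_of_lt hcb) hfc.continuousOn
      exact this ⟨le_of_lt hfbν, le_trans (le_of_lt hν2) hcase⟩
    have hdb : d < b := by
      rcases lt_or_eq_of_le hdmem.2 with h | h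
      · exact h
      · exfalso; rw [h] at hfd; linarith
    have hds : 0 < d - s := by have := hdmem.1; linarith
    set θ''' : ℝ := (b - s) / (d - s) with hθ'''
    have hθ'''1 : 1 < θ''' := by rw [hθ''', lt_div_iff₀ hds]; linarith
    have hθ'''θ₀ : θ''' < θ₀ := by
      have h1 : θ''' ≤ θ'' := by
        rw [hθ''', div_le_iff₀ hds]
        have hcd : c - s ≤ d - s := by linarith [hdmem.1]
        calc b - s = θ'' * (c - s) := by linarith [hdil]
          _ ≤ θ'' * (d - s) := by exact (mul_le_mul_iff_right₀ hθ''pos).mpr hcd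
      linarith
    have hkey := key s d ν θ''' hfs hfd hνpos hν2 hθ'''1 hθ'''θ₀
    have hdil' : s + θ''' * (d - s) = b := by rw [hθ''']; field_simp; ring
    rw [hdil'] at hkey
    have : ν < θ''' * ν := by
      have h5 := mul_lt_mul_of_pos_right hθ'''1 hνpos
      linarith
    linarith [hfb, hLt₁ b]
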